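/- The 𝔽₂-algebra 𝔽₂[X, Y]/(X² + Y² − 1) is isomorphic, as an 𝔽₂-algebra, to (𝔽₂[T])[z]/(z²): explicitly, X² + Y² − 1 = (X + Y + 1)² in 𝔽₂[X, Y], and an isomorphism sends T to the class of X and z to the class of X + Y + 1. In particular, 𝔽₂[X, Y]/(X² + Y² − 1) is not a reduced ring, and consequently the ℤ₂-algebra ℤ₂[X, Y]/(X² + Y² − 1) is not formally smooth over ℤ₂. -/

import Mathlib

set_option synthInstance.maxHeartbeats 1000000
set_option maxHeartbeats 1000000

open MvPolynomial

lemma Ed.two_eq_zero' (S : Type*) [CommRing S] [Algebra (ZMod 2) S] : (2:S) = 0 := by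
  rw [← map_ofNat (algebraMap (ZMod 2) S) 2, show ((2:ZMod 2)) = 0 by decide, map_zero]

noncomputable section EdAux
namespace Ed

abbrev Apoly := Polynomial (Polynomial (ZMod 2))
abbrev A := Apoly ⧸ Ideal.span {(Polynomial.X : Apoly) ^ 2}
abbrev Bpoly := MvPolynomial (Fin 2) (ZMod 2)
abbrev f2 : Bpoly := X 0 ^ 2 + X 1 ^ 2 - 1
abbrev B := Bpoly ⧸ Ideal.span {f2}

lemma key : f2 = (X 0 + X 1 + 1) ^ 2 := by
  have h2 := two_eq_zero' Bpoly
  linear_combination (-(X 0*X 1 + X 0 + X 1 + 1)) * h2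

def φ0 : Apoly →ₐ[ZMod 2] B :=
  Polynomial.aevalTower (Polynomial.aeval (Ideal.Quotient.mk _ (X 0)))
    (Ideal.Quotient.mk _ (X 0 + X 1 + 1))

lemma φ0_X : φ0 Polynomial.X = Ideal.Quotient.mk _ (X 0 + X 1 + 1) :=
  Polynomial.aevalTower_X _ _

lemma φ0_CX : φ0 (Polynomial.C Polynomial.X) = Ideal.Quotient.mk _ (X 0) := by
  rw [φ0, Polynomial.aevalTower_C, Polynomial.aeval_X]

lemma φ0_X2 : φ0 (Polynomial.X ^ 2) = 0 := by
  rw [map_pow, φ0_X, ← map_pow, ← key, Ideal.Quotient.eq_zero_iff_mem]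
  exact Ideal.subset_span rfl

def φ : A →ₐ[ZMod 2] B :=
  Ideal.Quotient.liftₐ _ φ0 (by
    intro a ha
    rw [Ideal.mem_span_singleton] at ha
    obtain ⟨c, rfl⟩ := ha
    rw [map_mul, φ0_X2]; exact zero_mul (φ0 c))

def ψ0 : Bpoly →ₐ[ZMod 2] A :=
  MvPolynomial.aeval ![Ideal.Quotient.mk (Ideal.span {(Polynomial.X : Apoly) ^ 2}) (Polynomial.C Polynomial.X),
    Ideal.Quotient.mk (Ideal.span {(Polynomial.X : Apoly) ^ 2}) (Polynomial.X + Polynomial.C Polynomial.X + 1)]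

lemma mkX2 : (Ideal.Quotient.mk (Ideal.span {(Polynomial.X : Apoly) ^ 2}) (Polynomial.X ^ 2)) = 0 := by
  rw [Ideal.Quotient.eq_zero_iff_mem]; exact Ideal.subset_span rfl

lemma ψ0_f2 : ψ0 f2 = 0 := by
  have h2 := two_eq_zero' A
  have hz : (Ideal.Quotient.mk (Ideal.span {(Polynomial.X : Apoly) ^ 2}) Polynomial.X) ^ 2 = 0 := by
    rw [← map_pow]; exact mkX2
  simp only [ψ0, f2, map_sub, map_add, map_pow, map_one, MvPolynomial.aeval_X]
  simp only [Matrix.cons_val_zero, Matrix.cons_val_one, Matrix.head_cons]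
  linear_combination hz + (Ideal.Quotient.mk _ (Polynomial.C Polynomial.X) * Ideal.Quotient.mk _ Polynomial.X + Ideal.Quotient.mk _ Polynomial.X + Ideal.Quotient.mk _ (Polynomial.C Polynomial.X) * Ideal.Quotient.mk _ (Polynomial.C Polynomial.X) + Ideal.Quotient.mk _ (Polynomial.C Polynomial.X)) * h2

def ψ : B →ₐ[ZMod 2] A :=
  Ideal.Quotient.liftₐ _ ψ0 (by
    intro a ha
    rw [Ideal.mem_span_singleton] at ha
    obtain ⟨c, rfl⟩ := ha
    rw [map_mul, ψ0_f2]; exact zero_mul (ψ0 c))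

lemma φ_mk (p : Apoly) : φ (Ideal.Quotient.mk _ p) = φ0 p := rfl
lemma ψ_mk (p : Bpoly) : ψ (Ideal.Quotient.mk _ p) = ψ0 p := rfl

lemma comp1 : ψ.comp φ = AlgHom.id (ZMod 2) A := by
  apply Ideal.Quotient.algHom_ext
  apply Polynomial.algHom_ext'
  · apply Polynomial.algHom_ext
    show ψ (φ (Ideal.Quotient.mk _ (Polynomial.C Polynomial.X))) = _
    rw [φ_mk, φ0_CX, ψ_mk]
    show ψ0 (X 0) = _
    simp [ψ0]
  · show ψ (φ (Ideal.Quotient.mk _ Polynomial.X)) = _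
    rw [φ_mk, φ0_X, ψ_mk]
    have h2 := two_eq_zero' A
    simp only [map_add, map_one, ψ0, MvPolynomial.aeval_X, Matrix.cons_val_zero,
      Matrix.cons_val_one, Matrix.head_cons]
    show _ = Ideal.Quotient.mk _ Polynomial.X
    linear_combination (Ideal.Quotient.mk _ (Polynomial.C Polynomial.X) + 1) * h2

lemma comp2 : φ.comp ψ = AlgHom.id (ZMod 2) B := by
  apply Ideal.Quotient.algHom_ext
  apply MvPolynomial.algHom_ext
  intro i
  fin_cases i
  · show φ (ψ (Ideal.Quotient.mk _ (X 0))) = _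
    rw [ψ_mk, show ψ0 (X 0) = Ideal.Quotient.mk (Ideal.span {(Polynomial.X : Apoly) ^ 2}) (Polynomial.C Polynomial.X) by simp [ψ0], φ_mk, φ0_CX]
    rfl
  · show φ (ψ (Ideal.Quotient.mk _ (X 1))) = _
    rw [ψ_mk, show ψ0 (X 1) = Ideal.Quotient.mk (Ideal.span {(Polynomial.X : Apoly) ^ 2}) (Polynomial.X + Polynomial.C Polynomial.X + 1) by simp [ψ0], φ_mk]
    simp only [map_add, map_one, φ0_X, φ0_CX]
    show _ = Ideal.Quotient.mk _ (X 1)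
    have h2 := two_eq_zero' B
    linear_combination (Ideal.Quotient.mk (Ideal.span {f2}) (X 0) + 1) * h2

def e : A ≃ₐ[ZMod 2] B := AlgEquiv.ofAlgHom φ ψ comp2 comp1

lemma zA_ne : (Ideal.Quotient.mk (Ideal.span {(Polynomial.X : Apoly) ^ 2}) Polynomial.X) ≠ 0 := by
  rw [Ne, Ideal.Quotient.eq_zero_iff_mem, Ideal.mem_span_singleton]
  intro h
  have h1 := Polynomial.natDegree_le_of_dvd h (Polynomial.X_ne_zero)
  simp [Polynomial.natDegree_X_pow, Polynomial.natDegree_X] at h1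

lemma B_not_reduced : ¬ IsReduced B := by
  intro h
  apply zA_ne
  have hz : (e (Ideal.Quotient.mk _ Polynomial.X)) ^ 2 = 0 := by
    rw [← map_pow, ← map_pow, mkX2, map_zero]
  have := IsNilpotent.eq_zero (x := e (Ideal.Quotient.mk _ Polynomial.X)) ⟨2, hz⟩
  exact e.injective (by rw [this, map_zero])

/-! ### Non formal smoothness over ℤ₂ -/

abbrev C3 := Apoly ⧸ Ideal.span {(Polynomial.X : Apoly) ^ 3}

instance : CommRing C3 := Ideal.Quotient.commRing _

instance : Algebra ℤ_[2] C3 :=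
  ((algebraMap (ZMod 2) C3).comp (PadicInt.toZMod)).toAlgebra

def I3 : Ideal C3 := Ideal.span {Ideal.Quotient.mk _ ((Polynomial.X : Apoly) ^ 2)}

lemma mk3_X3 : (Ideal.Quotient.mk (Ideal.span {(Polynomial.X : Apoly) ^ 3}) (Polynomial.X ^ 3)) = 0 := by
  rw [Ideal.Quotient.eq_zero_iff_mem]; exact Ideal.subset_span rfl

lemma I3_sq : I3 ^ 2 = ⊥ := by
  rw [I3, Ideal.span_singleton_pow, Ideal.span_singleton_eq_bot, ← map_pow]
  rw [Ideal.Quotient.eq_zero_iff_mem, Ideal.mem_span_singleton]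
  exact ⟨Polynomial.X, by ring⟩

abbrev fZ : MvPolynomial (Fin 2) ℤ_[2] := X 0 ^ 2 + X 1 ^ 2 - 1

def tC : C3 ⧸ I3 := Ideal.Quotient.mk _ (Ideal.Quotient.mk _ (Polynomial.C Polynomial.X))
def zC : C3 ⧸ I3 := Ideal.Quotient.mk _ (Ideal.Quotient.mk _ (Polynomial.X))

lemma zC_sq : zC ^ 2 = 0 := by
  rw [zC, ← map_pow, ← map_pow, Ideal.Quotient.eq_zero_iff_mem]
  exact Ideal.subset_span rfl

def π0 : MvPolynomial (Fin 2) ℤ_[2] →ₐ[ℤ_[2]] C3 ⧸ I3 :=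
  MvPolynomial.aeval ![tC, tC + zC + 1]

lemma π0_fZ : π0 fZ = 0 := by
  have h2 := two_eq_zero' (C3 ⧸ I3)
  simp only [π0, fZ, map_sub, map_add, map_pow, map_one, MvPolynomial.aeval_X,
    Matrix.cons_val_zero, Matrix.cons_val_one, Matrix.head_cons]
  linear_combination zC_sq + (tC*tC + tC*zC + tC + zC) * h2

def πbar : (MvPolynomial (Fin 2) ℤ_[2] ⧸ Ideal.span {fZ}) →ₐ[ℤ_[2]] C3 ⧸ I3 :=
  Ideal.Quotient.liftₐ _ π0 (by
    intro a ha
    rw [Ideal.mem_span_singleton] at ha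
    obtain ⟨c, rfl⟩ := ha
    rw [map_mul, π0_fZ]; exact zero_mul (π0 c))

lemma not_fs : ¬ Algebra.FormallySmooth ℤ_[2] (MvPolynomial (Fin 2) ℤ_[2] ⧸
    Ideal.span {(X 0 ^ 2 + X 1 ^ 2 - 1 : MvPolynomial (Fin 2) ℤ_[2])}) := by
  intro hfs
  obtain ⟨g, hg⟩ := Algebra.FormallySmooth.comp_surjective (R := ℤ_[2]) (A := _) I3 I3_sq πbar
  set T : C3 := Ideal.Quotient.mk _ (Polynomial.C Polynomial.X) with hT
  set ζ : C3 := Ideal.Quotient.mk _ (Polynomial.X) with hζ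
  set a : C3 := g (Ideal.Quotient.mk _ (X 0)) with ha
  set b : C3 := g (Ideal.Quotient.mk _ (X 1)) with hb
  have h2 := two_eq_zero' C3
  have h3 : ζ ^ 3 = 0 := by rw [hζ, ← map_pow]; exact mk3_X3
  have hab : a ^ 2 + b ^ 2 - 1 = 0 := by
    have : Ideal.Quotient.mk (Ideal.span {fZ}) fZ = 0 := by
      rw [Ideal.Quotient.eq_zero_iff_mem]; exact Ideal.subset_span rfl
    have := congrArg g this
    simpa only [fZ, map_sub, map_add, map_pow, map_one, map_zero, ← ha, ← hb] using this
  have hA : Ideal.Quotient.mk I3 a = tC := by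
    have := congrFun (congrArg DFunLike.coe hg) (Ideal.Quotient.mk _ (X 0))
    rw [show πbar (Ideal.Quotient.mk _ (X 0)) = π0 (X 0) from rfl] at this
    simpa [π0] using this
  have hB : Ideal.Quotient.mk I3 b = tC + zC + 1 := by
    have := congrFun (congrArg DFunLike.coe hg) (Ideal.Quotient.mk _ (X 1))
    rw [show πbar (Ideal.Quotient.mk _ (X 1)) = π0 (X 1) from rfl] at this
    simpa [π0] using this
  have hA' : ∃ u, a = T + ζ ^ 2 * u := by
    have : a - T ∈ I3 := by
      rw [← Ideal.Quotient.eq_zero_iff_mem, map_sub, hA, sub_eq_zero]; rfl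
    rw [I3, Ideal.mem_span_singleton] at this
    obtain ⟨u, hu⟩ := this
    exact ⟨u, by rw [← map_pow]; linear_combination hu⟩
  have hB' : ∃ v, b = ζ + T + 1 + ζ ^ 2 * v := by
    have : b - (ζ + T + 1) ∈ I3 := by
      rw [← Ideal.Quotient.eq_zero_iff_mem, map_sub, hB, sub_eq_zero]
      simp only [map_add, map_one]
      rw [show (Ideal.Quotient.mk I3 T) = tC from rfl, show (Ideal.Quotient.mk I3 ζ) = zC from rfl]
      ring
    rw [I3, Ideal.mem_span_singleton] at this
    obtain ⟨v, hv⟩ := this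
    exact ⟨v, by rw [← map_pow]; linear_combination hv⟩
  obtain ⟨u, hu⟩ := hA'
  obtain ⟨v, hv⟩ := hB'
  rw [hu, hv] at hab
  have hz2 : ζ ^ 2 = 0 := by
    linear_combination hab - (T^2+T*ζ^2*u+ζ*T+ζ+T+T*ζ^2*v+ζ^2*v+ζ^3*v)*h2 - (ζ*u^2+ζ*v^2)*h3
  rw [hζ, ← map_pow, Ideal.Quotient.eq_zero_iff_mem, Ideal.mem_span_singleton] at hz2
  have h1 := Polynomial.natDegree_le_of_dvd hz2 (pow_ne_zero 2 Polynomial.X_ne_zero)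
  simp [Polynomial.natDegree_X_pow] at h1

end Ed
end EdAux

/-- **Example 3.15 (Edixhoven's example), non-smoothness part**: in `𝔽₂[X,Y]` one has
`X² + Y² − 1 = (X + Y + 1)²`; there is an `𝔽₂`-algebra isomorphism
`𝔽₂[T][z]/(z²) ≅ 𝔽₂[X,Y]/(X² + Y² − 1)` sending `T` to the class of `X` and `z` to the class
of `X + Y + 1`; in particular `𝔽₂[X,Y]/(X² + Y² − 1)` is not reduced, and consequently
`ℤ₂[X,Y]/(X² + Y² − 1)` is not formally smooth over `ℤ₂`. -/
theorem circle_over_F2_nonreduced_and_not_formally_smooth :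
    ((X 0 ^ 2 + X 1 ^ 2 - 1 : MvPolynomial (Fin 2) (ZMod 2)) = (X 0 + X 1 + 1) ^ 2) ∧
    (∃ e : (Polynomial (Polynomial (ZMod 2)) ⧸
          Ideal.span {(Polynomial.X : Polynomial (Polynomial (ZMod 2))) ^ 2}) ≃ₐ[ZMod 2]
        (MvPolynomial (Fin 2) (ZMod 2) ⧸ Ideal.span {X 0 ^ 2 + X 1 ^ 2 - 1}),
      e (Ideal.Quotient.mk _ (Polynomial.C Polynomial.X)) = Ideal.Quotient.mk _ (X 0) ∧
      e (Ideal.Quotient.mk _ Polynomial.X) = Ideal.Quotient.mk _ (X 0 + X 1 + 1)) ∧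
    (¬ IsReduced (MvPolynomial (Fin 2) (ZMod 2) ⧸
        Ideal.span {(X 0 ^ 2 + X 1 ^ 2 - 1 : MvPolynomial (Fin 2) (ZMod 2))})) ∧
    (¬ Algebra.FormallySmooth ℤ_[2] (MvPolynomial (Fin 2) ℤ_[2] ⧸
        Ideal.span {(X 0 ^ 2 + X 1 ^ 2 - 1 : MvPolynomial (Fin 2) ℤ_[2])})) := by
  refine ⟨Ed.key, ⟨Ed.e, Ed.φ0_CX, Ed.φ0_X⟩, Ed.B_not_reduced, Ed.not_fs⟩
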